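/- Let L > 0, λ̃ ≥ 0 and let g : [0,L] → ℝ be continuous. If z : ℝ → ℝ is three times continuously differentiable on [0,L], satisfies z(0) = z(L) = 0 and z′(L) = 0, and satisfies λ̃·z(x) + z″′(x) + z′(x) = g(x) for all x ∈ [0,L], then (3/2) ∫₀^L z′(x)² dx ≤ ∫₀^L z(x)² dx + (L²/2) ∫₀^L g(x)² dx. -/

import Mathlib

/-- If `z` is three times continuously differentiable on `[0,L]`, satisfies
`z(0) = z(L) = z′(L) = 0` and `λ̃ z + z″′ + z′ = g` on `[0,L]` with `g`
continuous and `λ̃ ≥ 0`, then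
`(3/2) ∫₀^L (z′)² ≤ ∫₀^L z² + (L²/2) ∫₀^L g²`. -/
theorem kdv_resolvent_H1_bound (L lam : ℝ) (hL : 0 < L) (hlam : 0 ≤ lam)
    (g : ℝ → ℝ) (hg : ContinuousOn g (Set.Icc 0 L))
    (z z₁ z₂ z₃ : ℝ → ℝ)
    (hz₁ : ∀ x ∈ Set.Icc (0:ℝ) L, HasDerivWithinAt z (z₁ x) (Set.Icc 0 L) x)
    (hz₂ : ∀ x ∈ Set.Icc (0:ℝ) L, HasDerivWithinAt z₁ (z₂ x) (Set.Icc 0 L) x)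
    (hz₃ : ∀ x ∈ Set.Icc (0:ℝ) L, HasDerivWithinAt z₂ (z₃ x) (Set.Icc 0 L) x)
    (hz₃cont : ContinuousOn z₃ (Set.Icc 0 L))
    (hbc0 : z 0 = 0) (hbcL : z L = 0) (hbc1 : z₁ L = 0)
    (heq : ∀ x ∈ Set.Icc (0:ℝ) L, lam * z x + z₃ x + z₁ x = g x) :
    (3/2) * ∫ x in (0:ℝ)..L, (z₁ x)^2
      ≤ (∫ x in (0:ℝ)..L, (z x)^2) + (L^2/2) * ∫ x in (0:ℝ)..L, (g x)^2 := by
  have h0L : (0:ℝ) ≤ L := hL.le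
  have huIcc : Set.uIcc (0:ℝ) L = Set.Icc 0 L := Set.uIcc_of_le h0L
  -- continuity
  have hzc : ContinuousOn z (Set.Icc 0 L) := fun x hx => (hz₁ x hx).continuousWithinAt
  have hz1c : ContinuousOn z₁ (Set.Icc 0 L) := fun x hx => (hz₂ x hx).continuousWithinAt
  have hz2c : ContinuousOn z₂ (Set.Icc 0 L) := fun x hx => (hz₃ x hx).continuousWithinAt
  have hidc : ContinuousOn (fun y : ℝ => y) (Set.Icc 0 L) := continuousOn_id
  -- the antiderivative
  set F : ℝ → ℝ := fun y => y * z y * z₂ y - z y * z₁ y - y * (z₁ y)^2 / 2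
      + y * (z y)^2 / 2 with hFdef
  set Fd : ℝ → ℝ := fun y => y * z y * z₃ y + y * z y * z₁ y - (3/2) * (z₁ y)^2
      + (z y)^2 / 2 with hFddef
  have hF : ∀ x ∈ Set.Icc (0:ℝ) L, HasDerivWithinAt F (Fd x) (Set.Icc 0 L) x := by
    intro x hx
    have h1 := hz₁ x hx; have h2 := hz₂ x hx; have h3 := hz₃ x hx
    have hid : HasDerivWithinAt (fun y : ℝ => y) 1 (Set.Icc 0 L) x :=
      hasDerivWithinAt_id x _
    have T := ((((hid.mul h1).mul h3).sub (h1.mul h2)).sub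
        ((hid.mul (h2.pow 2)).div_const 2)).add ((hid.mul (h1.pow 2)).div_const 2)
    refine T.congr_deriv ?_
    simp only [Fd, Pi.mul_apply, Pi.pow_apply]
    push_cast
    ring
  have hFdc : ContinuousOn Fd (Set.Icc 0 L) := by
    apply ContinuousOn.add
    apply ContinuousOn.sub
    apply ContinuousOn.add
    · exact (hidc.mul hzc).mul hz₃cont
    · exact (hidc.mul hzc).mul hz1c
    · exact (continuousOn_const.mul (hz1c.pow 2))
    · exact (hzc.pow 2).div_const 2
  have hFdint : IntervalIntegrable Fd MeasureTheory.volume 0 L :=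
    (hFdc.mono (by rw [huIcc])).intervalIntegrable
  have key : ∫ x in (0:ℝ)..L, Fd x = F L - F 0 := by
    apply intervalIntegral.integral_eq_sub_of_hasDeriv_right_of_le h0L
    · intro x hx
      exact (hF x hx).continuousWithinAt
    · intro x hx
      have hmem : Set.Icc (0:ℝ) L ∈ nhdsWithin x (Set.Ioi x) :=
        nhdsWithin_le_nhds (Icc_mem_nhds hx.1 hx.2)
      exact ((hF x (Set.mem_Icc.2 ⟨hx.1.le, hx.2.le⟩)).mono_of_mem_nhdsWithin hmem)
    · exact hFdint
  have hFL : F L = 0 := by simp [F, hbcL, hbc1]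
  have hF0 : F 0 = 0 := by simp [F, hbc0]
  rw [hFL, hF0, sub_zero] at key
  -- rewrite Fd using the equation
  set G : ℝ → ℝ := fun y => y * z y * g y - lam * y * (z y)^2 - (3/2) * (z₁ y)^2
      + (z y)^2 / 2 with hGdef
  have hcongr : ∫ x in (0:ℝ)..L, Fd x = ∫ x in (0:ℝ)..L, G x := by
    apply intervalIntegral.integral_congr
    intro x hx
    rw [huIcc] at hx
    have := heq x hx
    simp only [Fd, G]
    linear_combination (x * z x) * this
  have hG0 : ∫ x in (0:ℝ)..L, G x = 0 := by rw [← hcongr, key]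
  -- split G
  set H : ℝ → ℝ := fun y => y * z y * g y - lam * y * (z y)^2 + (z y)^2 / 2 with hHdef
  have hHc : ContinuousOn H (Set.Icc 0 L) := by
    apply ContinuousOn.add
    apply ContinuousOn.sub
    · exact (hidc.mul hzc).mul hg
    · exact (continuousOn_const.mul hidc).mul (hzc.pow 2)
    · exact (hzc.pow 2).div_const 2
  have hHint : IntervalIntegrable H MeasureTheory.volume 0 L :=
    (hHc.mono (by rw [huIcc])).intervalIntegrable
  have hz1sqint : IntervalIntegrable (fun x => (z₁ x)^2) MeasureTheory.volume 0 L :=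
    ((hz1c.pow 2).mono (by rw [huIcc])).intervalIntegrable
  have hzsqint : IntervalIntegrable (fun x => (z x)^2) MeasureTheory.volume 0 L :=
    ((hzc.pow 2).mono (by rw [huIcc])).intervalIntegrable
  have hgsqint : IntervalIntegrable (fun x => (g x)^2) MeasureTheory.volume 0 L :=
    ((hg.pow 2).mono (by rw [huIcc])).intervalIntegrable
  have hsplit : ∫ x in (0:ℝ)..L, G x
      = (∫ x in (0:ℝ)..L, H x) - (3/2) * ∫ x in (0:ℝ)..L, (z₁ x)^2 := by
    rw [← intervalIntegral.integral_const_mul,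
      ← intervalIntegral.integral_sub hHint (hz1sqint.const_mul (3/2))]
    apply intervalIntegral.integral_congr
    intro x hx
    simp only [G, H]
    ring
  have hmain : (3/2) * ∫ x in (0:ℝ)..L, (z₁ x)^2 = ∫ x in (0:ℝ)..L, H x := by
    linarith [hG0, hsplit]
  rw [hmain]
  -- pointwise bound
  have hRint : IntervalIntegrable (fun x => (z x)^2 + L^2/2 * (g x)^2)
      MeasureTheory.volume 0 L := hzsqint.add (hgsqint.const_mul _)
  have hmono : ∫ x in (0:ℝ)..L, H x
      ≤ ∫ x in (0:ℝ)..L, ((z x)^2 + L^2/2 * (g x)^2) := by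
    apply intervalIntegral.integral_mono_on h0L hHint hRint
    intro x hx
    simp only [H]
    nlinarith [sq_nonneg (x * g x - z x), sq_nonneg (g x),
      mul_nonneg (mul_nonneg hlam hx.1) (sq_nonneg (z x)),
      mul_nonneg (mul_nonneg (sub_nonneg.2 hx.2) (by linarith [hx.1] : (0:ℝ) ≤ L + x))
        (sq_nonneg (g x))]
  calc ∫ x in (0:ℝ)..L, H x ≤ ∫ x in (0:ℝ)..L, ((z x)^2 + L^2/2 * (g x)^2) := hmono
    _ = (∫ x in (0:ℝ)..L, (z x)^2) + (L^2/2) * ∫ x in (0:ℝ)..L, (g x)^2 := by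
        rw [intervalIntegral.integral_add hzsqint (hgsqint.const_mul _),
          intervalIntegral.integral_const_mul]
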